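/- Let R be a valuation domain with maximal ideal P and let J = ⋂_{n∈ℕ} P^n. If the localization R_J is a maximal valuation domain, then R^Λ is a separable R-module for every index set Λ. -/

import Mathlib

open Pointwise

section Defs
universe u v
variable (R : Type u) [CommRing R]

/-- `U` is a pure submodule of its ambient module: `rU = U ∩ rM` for all `r`. -/
def IsPureSub {M : Type v} [AddCommGroup M] [Module R M] (U : Submodule R M) : Prop :=
  ∀ (r : R) (x : M), x ∈ U → (∃ m : M, r • m = x) → ∃ u ∈ U, r • u = x

/-- `U` is uniserial: its submodules are totally ordered by inclusion. -/
def IsUniserialSub {M : Type v} [AddCommGroup M] [Module R M] (U : Submodule R M) : Prop :=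
  ∀ A B : Submodule R ↥U, A ≤ B ∨ B ≤ A

/-- `U` is a direct summand of its ambient module. -/
def IsSummand {M : Type v} [AddCommGroup M] [Module R M] (U : Submodule R M) : Prop :=
  ∃ V : Submodule R M, IsCompl U V

/-- A (torsion-free) module is separable if every pure uniserial submodule is a summand. -/
def IsSeparableMod (M : Type v) [AddCommGroup M] [Module R M] : Prop :=
  ∀ U : Submodule R M, IsPureSub R U → IsUniserialSub R U → IsSummand R U

/-- `R/A` is complete in the `R/A`-topology: every coherent family of cosets
`(aᵢ + Bᵢ)` with `⋂ᵢ Bᵢ = A` has a common point. -/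
def IsCompleteQuot (A : Ideal R) : Prop :=
  ∀ (ι : Type u) (a : ι → R) (B : ι → Ideal R),
    (∀ i, A ≤ B i) → (∀ i j, B i ≤ B j → a i - a j ∈ B j) → (⨅ i, B i) = A →
    ∃ c : R, ∀ i, c - a i ∈ B i

/-- A valuation ring with maximal ideal `P` is maximal: `R/A` is complete in the
`R/A`-topology for every proper ideal `A` with `A ≠ Pa` for all nonzero `a`. -/
def IsMaximalVD (P : Ideal R) : Prop :=
  ∀ A : Ideal R, A ≠ ⊤ → (∀ a : R, a ≠ 0 → A ≠ Ideal.span {a} * P) → IsCompleteQuot R A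

/-- A module `M` is slender if every homomorphism `R^ℕ → M` kills almost all
standard unit vectors. -/
def IsSlender (M : Type v) [AddCommGroup M] [Module R M] : Prop :=
  ∀ f : ((ℕ → R) →ₗ[R] M), ∃ n₀ : ℕ, ∀ n ≥ n₀, f (Pi.single n 1) = 0

end Defs

set_option linter.unusedSectionVars false
set_option maxHeartbeats 1000000

namespace Stmt3
universe u
variable {R : Type u} [CommRing R] [IsDomain R] [ValuationRing R] {Λ : Type u}

lemma smul_cancel {r : R} (hr : r ≠ 0) {m m' : Λ → R} (h : r • m = r • m') : m = m' := by
  funext l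
  have h' := congrFun h l
  simp only [Pi.smul_apply, smul_eq_mul] at h'
  exact mul_left_cancel₀ hr h'

lemma scalar_cancel {u : Λ → R} (hu : u ≠ 0) {x x' : R} (h : x • u = x' • u) : x = x' := by
  obtain ⟨l, hl⟩ := Function.ne_iff.mp hu
  have h' := congrFun h l
  simp only [Pi.smul_apply, smul_eq_mul] at h'
  exact mul_right_cancel₀ hl h'

lemma summand_of_proj {M : Type u} [AddCommGroup M] [Module R M] {U : Submodule R M}
    (p : M →ₗ[R] M) (hrange : ∀ m, p m ∈ U) (hid : ∀ u ∈ U, p u = u) : IsSummand R U := by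
  refine ⟨LinearMap.ker p, Submodule.disjoint_def.mpr fun x hxU hxk => ?_, codisjoint_iff.mpr ?_⟩
  · rw [← hid x hxU]; exact LinearMap.mem_ker.mp hxk
  · rw [eq_top_iff]
    intro m _
    exact Submodule.mem_sup.mpr ⟨p m, hrange m, m - p m,
      LinearMap.mem_ker.mpr (by rw [map_sub, hid _ (hrange m), sub_self]), by abel⟩

lemma key (J : Ideal R) [J.IsPrime]
    (hmax : IsMaximalVD (Localization.AtPrime J)
      (IsLocalRing.maximalIdeal (Localization.AtPrime J)))
    (U : Submodule R (Λ → R))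
    (huni : ∀ u ∈ U, ∀ v ∈ U, (∃ c : R, u = c • v) ∨ (∃ c : R, v = c • u))
    (hdiv : ∀ s : R, s ∉ J → ∀ u ∈ U, ∃ z ∈ U, u = s • z)
    (I : Type u) (w : I → (Λ → R)) (hw : ∀ i, w i ∈ U) (d : I → R)
    (hcoh : ∀ i k, d i ∣ d k → ∃ z ∈ U, w k - w i = d i • z) :
    ∃ c ∈ U, ∀ i, ∃ z ∈ U, c - w i = d i • z := by
  classical
  by_cases h0 : ∃ i, d i = 0
  · obtain ⟨i0, hi0⟩ := h0
    exact ⟨w i0, hw i0, fun i => hcoh i i0 (hi0 ▸ dvd_zero _)⟩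
  push_neg at h0
  by_cases hall : ∀ i, ∀ u ∈ U, ∃ z ∈ U, u = d i • z
  · refine ⟨0, U.zero_mem, fun i => ?_⟩
    obtain ⟨z, hz, hz2⟩ := hall i (-(w i)) (U.neg_mem (hw i))
    exact ⟨z, hz, by rw [zero_sub, hz2]⟩
  push_neg at hall
  obtain ⟨i1, u₁, hu₁U, hu₁⟩ := hall
  set r₀ : R := d i1 with hr₀def
  have hr₀ : r₀ ≠ 0 := h0 i1
  have hu₁0 : u₁ ≠ 0 := fun h => hu₁ 0 U.zero_mem (by rw [h, smul_zero])
  have huniq : ∀ x x' : R, x • u₁ = x' • u₁ → x = x' := fun x x' h => scalar_cancel hu₁0 h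
  have heX : ∀ u ∈ U, ∃ x : R, r₀ • u = x • u₁ := by
    intro u hu
    rcases huni u hu u₁ hu₁U with ⟨c, hc⟩ | ⟨c, hc⟩
    · exact ⟨r₀ * c, by rw [hc, smul_smul]⟩
    · rcases ValuationRing.dvd_total c r₀ with ⟨e, he⟩ | ⟨e, he⟩
      · refine ⟨e, ?_⟩
        rw [he, hc, smul_smul, mul_comm]
      · exact absurd (by rw [hc, he, mul_smul]) (hu₁ (e • u) (U.smul_mem e hu))
  have heX' : ∀ u : Λ → R, ∃ x : R, u ∈ U → r₀ • u = x • u₁ := by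
    intro u
    by_cases hu : u ∈ U
    · obtain ⟨x, hx⟩ := heX u hu; exact ⟨x, fun _ => hx⟩
    · exact ⟨0, fun h => absurd h hu⟩
  choose efn hefn using heX'
  set Wid : Ideal R :=
    { carrier := {x | ∃ u ∈ U, r₀ • u = x • u₁}
      add_mem' := by
        rintro a b ⟨u, hu, hux⟩ ⟨v, hv, hvx⟩
        exact ⟨u + v, U.add_mem hu hv, by rw [smul_add, hux, hvx, add_smul]⟩
      zero_mem' := ⟨0, U.zero_mem, by simp⟩
      smul_mem' := by
        rintro c x ⟨u, hu, hux⟩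
        refine ⟨c • u, U.smul_mem c hu, ?_⟩
        rw [smul_comm, hux, smul_smul, smul_eq_mul] } with hWiddef
  have hefnWid : ∀ u ∈ U, efn u ∈ Wid := fun u hu => ⟨u, hu, hefn u hu⟩
  set S := Localization.AtPrime J with hSdef
  set f := algebraMap R S with hfdef
  have hle : J.primeCompl ≤ nonZeroDivisors R := fun x hx =>
    mem_nonZeroDivisors_of_ne_zero (fun h => hx (h ▸ J.zero_mem))
  have finj : Function.Injective f := IsLocalization.injective S hle
  have hassoc : ∀ (p : R) (q : J.primeCompl),
      (IsLocalization.mk' S p q ∣ f p) ∧ (f p ∣ IsLocalization.mk' S p q) := by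
    intro p q
    constructor
    · exact ⟨f ↑q, (IsLocalization.mk'_spec S p q).symm⟩
    · exact ⟨IsLocalization.mk' S 1 q, IsLocalization.mk'_eq_mul_mk'_one p q⟩
  have hdvdS : ∀ α β : S, α ∣ β ∨ β ∣ α := by
    intro α β
    obtain ⟨p, q, hpq⟩ := IsLocalization.exists_mk'_eq J.primeCompl α
    obtain ⟨p', q', hpq'⟩ := IsLocalization.exists_mk'_eq J.primeCompl β
    rcases ValuationRing.dvd_total p p' with h | h
    · left
      exact dvd_trans (dvd_trans (hpq ▸ (hassoc p q).1) (map_dvd f h))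
        (hpq' ▸ (hassoc p' q').2)
    · right
      exact dvd_trans (dvd_trans (hpq' ▸ (hassoc p' q').1) (map_dvd f h))
        (hpq ▸ (hassoc p q).2)
  set I' := {i : I // ¬ ∀ u ∈ U, ∃ z ∈ U, u = d i • z} with hI'def
  set B : I' → Ideal S := fun i => Ideal.map f (Ideal.span {d i.1} * Wid) with hBdef
  set a : I' → S := fun i => f (efn (w i.1)) with hadef
  have hco : ∀ i k : I, d i ∣ d k →
      ∃ x ∈ Ideal.span {d i} * Wid, efn (w k) - efn (w i) = x := by
    intro i k hdk
    obtain ⟨z, hz, hz2⟩ := hcoh i k hdk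
    refine ⟨d i * efn z,
      Ideal.mul_mem_mul (Ideal.mem_span_singleton_self _) (hefnWid z hz), ?_⟩
    apply huniq
    rw [sub_smul, ← hefn (w k) (hw k), ← hefn (w i) (hw i), ← smul_sub, hz2, mul_smul,
      ← hefn z hz, smul_comm]
  have hstar : ∀ i k : I', a k - a i ∈ B i ∨ a i - a k ∈ B k := by
    intro i k
    rcases ValuationRing.dvd_total (d i.1) (d k.1) with h | h
    · obtain ⟨x, hx, hx2⟩ := hco i.1 k.1 h
      left
      have : a k - a i = f x := by rw [hadef, ← map_sub, hx2]
      rw [this]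
      exact Ideal.mem_map_of_mem f hx
    · obtain ⟨x, hx, hx2⟩ := hco k.1 i.1 h
      right
      have : a i - a k = f x := by rw [hadef, ← map_sub, hx2]
      rw [this]
      exact Ideal.mem_map_of_mem f hx
  have hWJ : ∀ i : I', Ideal.span {d i.1} * Wid ≤ J := by
    intro i x hx
    rw [Ideal.mem_span_singleton_mul] at hx
    obtain ⟨x₀, hx₀, rfl⟩ := hx
    by_contra hxJ
    refine i.2 (fun v hv => ?_)
    obtain ⟨z, hz, hz2⟩ := hdiv _ hxJ v hv
    exact ⟨x₀ • z, U.smul_mem _ hz, by rw [hz2, smul_smul, mul_smul]⟩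
  have hBmax : ∀ i : I', B i ≤ IsLocalRing.maximalIdeal S := by
    intro i
    calc B i ≤ Ideal.map f J := Ideal.map_mono (hWJ i)
    _ = IsLocalRing.maximalIdeal S := Localization.AtPrime.map_eq_maximalIdeal
  have hDESC : ∀ i : I', ∀ y ∈ B i, ∃ x ∈ Ideal.span {d i.1} * Wid, y = f x := by
    intro i y hy
    have hdivI : ∀ b ∈ J.primeCompl, ∀ x ∈ Ideal.span {d i.1} * Wid,
        ∃ x' ∈ Ideal.span {d i.1} * Wid, x = b * x' := by
      intro b hb x hx
      rw [Ideal.mem_span_singleton_mul] at hx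
      obtain ⟨x₀, hx₀, rfl⟩ := hx
      obtain ⟨u, hu, hux⟩ := hx₀
      obtain ⟨z, hz, hz2⟩ := hdiv b hb u hu
      have hx₀b : x₀ = b * efn z := by
        apply huniq
        rw [← hux, hz2, smul_comm, hefn z hz, smul_smul]
      refine ⟨d i.1 * efn z, Ideal.mul_mem_mul (Ideal.mem_span_singleton_self _)
        (hefnWid z hz), ?_⟩
      rw [hx₀b]; ring
    have hy' : y ∈ Ideal.span (⇑f '' ((Ideal.span {d i.1} * Wid : Ideal R) : Set R)) := hy
    clear hy
    refine Submodule.span_induction ?_ ?_ ?_ ?_ hy'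
    · rintro _ ⟨x, hx, rfl⟩; exact ⟨x, hx, rfl⟩
    · exact ⟨0, Submodule.zero_mem _, (map_zero f).symm⟩
    · rintro y1 y2 hy1 hy2 ⟨x1, hx1, hfx1⟩ ⟨x2, hx2, hfx2⟩
      exact ⟨x1 + x2, Submodule.add_mem _ hx1 hx2, by rw [map_add, hfx1, hfx2]⟩
    · rintro s y1 hy1 ⟨x, hx, hfx⟩
      obtain ⟨p, q, hpq⟩ := IsLocalization.exists_mk'_eq J.primeCompl s
      obtain ⟨x', hx', hxq⟩ := hdivI q q.2 x hx
      refine ⟨p * x', Ideal.mul_mem_left _ p hx', ?_⟩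
      rw [smul_eq_mul, hfx, hxq, map_mul, map_mul, ← hpq, ← mul_assoc,
        IsLocalization.mk'_spec]
  have hi1vac : ¬ ∀ u ∈ U, ∃ z ∈ U, u = d i1 • z := by
    intro h
    obtain ⟨z, hz, hz2⟩ := h u₁ hu₁U
    exact hu₁ z hz hz2
  set i1' : I' := ⟨i1, hi1vac⟩ with hi1'def
  have hmain : ∃ c₀ : S, ∀ i : I', c₀ - a i ∈ B i := by
    by_cases hmin : ∃ i0 : I', ∀ i : I', B i0 ≤ B i
    · obtain ⟨i0, hi0⟩ := hmin
      refine ⟨a i0, fun i => ?_⟩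
      rcases hstar i i0 with h | h
      · exact h
      · have := (B i).neg_mem (hi0 i h)
        rwa [neg_sub] at this
    · push_neg at hmin
      set A := ⨅ i : I', B i with hAdef
      have hAle : ∀ i : I', A ≤ B i := fun i => iInf_le _ i
      have hAtop : A ≠ ⊤ := by
        intro h
        have h1 := (hAle i1').trans (hBmax i1')
        rw [h] at h1
        exact (IsLocalRing.maximalIdeal.isMaximal S).ne_top (top_le_iff.mp h1)
      have hAP : ∀ α : S, α ≠ 0 → A ≠ Ideal.span {α} * IsLocalRing.maximalIdeal S := by
        intro α hα hEq
        have hBlt : ∀ i : I', A < B i := by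
          intro i
          refine lt_of_le_of_ne (hAle i) (fun h => ?_)
          obtain ⟨k, hk⟩ := hmin i
          exact hk (by rw [← h]; exact hAle k)
        have hspan : ∀ i : I', Ideal.span {α} ≤ B i := by
          intro i
          obtain ⟨b, hbB, hbA⟩ := SetLike.exists_of_lt (hBlt i)
          have hbspan : α ∈ B i := by
            rcases hdvdS α b with ⟨s, hs⟩ | ⟨s, hs⟩
            · have hsu : IsUnit s := by
                by_contra hsu
                refine hbA ?_
                rw [hEq, hs]
                exact Ideal.mul_mem_mul (Ideal.mem_span_singleton_self α)
                  ((IsLocalRing.mem_maximalIdeal _).mpr hsu)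
              obtain ⟨t, ht⟩ := hsu.exists_right_inv
              have hba : α = b * t := by
                rw [hs, mul_assoc, ht, mul_one]
              rw [hba]
              exact Ideal.mul_mem_right _ _ hbB
            · rw [hs]
              exact Ideal.mul_mem_right _ _ hbB
          exact (Ideal.span_singleton_le_iff_mem _).mpr hbspan
        have hαA : α ∈ A := (le_iInf hspan) (Ideal.mem_span_singleton_self α)
        rw [hEq, Ideal.mem_span_singleton_mul] at hαA
        obtain ⟨z, hz, hzz⟩ := hαA
        have h1 : α * (1 - z) = 0 := by rw [mul_sub, mul_one, hzz, sub_self]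
        have hunit : IsUnit (1 - z) := IsLocalRing.isUnit_one_sub_self_of_mem_nonunits z hz
        exact hα ((IsUnit.mul_left_eq_zero hunit).mp h1)
      have hcoh2 : ∀ i k : I', B i ≤ B k → a i - a k ∈ B k := by
        intro i k hik
        rcases hstar k i with h | h
        · exact h
        · have := (B k).neg_mem (hik h)
          rwa [neg_sub] at this
      exact hmax A hAtop hAP I' a B hAle hcoh2 hAdef.symm
  obtain ⟨c₀, hc₀⟩ := hmain
  obtain ⟨x1, hx1mem, hx1⟩ := hDESC i1' _ (hc₀ i1')
  have hc₁Wid : efn (w i1) + x1 ∈ Wid :=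
    Wid.add_mem (hefnWid _ (hw i1)) (Ideal.mul_le_right hx1mem)
  have hc₀eq : c₀ = f (efn (w i1) + x1) := by
    rw [map_add, ← hx1, hadef]
    ring
  obtain ⟨uc, hucU, hucq⟩ := hc₁Wid
  refine ⟨uc, hucU, fun i => ?_⟩
  by_cases hvi : ∀ u ∈ U, ∃ z ∈ U, u = d i • z
  · obtain ⟨z, hz, hz2⟩ := hvi (uc - w i) (U.sub_mem hucU (hw i))
    exact ⟨z, hz, hz2⟩
  · set ii : I' := ⟨i, hvi⟩ with hiidef
    obtain ⟨x, hxmem, hxeq⟩ := hDESC ii _ (hc₀ ii)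
    have hdiff : efn (w i1) + x1 - efn (w i) = x := by
      apply finj
      rw [map_sub, ← hc₀eq]
      exact hxeq
    rw [Ideal.mem_span_singleton_mul] at hxmem
    obtain ⟨x₀, hx₀Wid, hx₀⟩ := hxmem
    obtain ⟨z, hzU, hz⟩ := hx₀Wid
    refine ⟨z, hzU, ?_⟩
    apply smul_cancel hr₀
    rw [smul_sub, hucq, hefn _ (hw i), ← sub_smul, hdiff, ← hx₀, mul_smul, ← hz]
    exact smul_comm _ _ _


theorem main (P : Ideal R) (hP : P.IsMaximal) (J : Ideal R)
    (hJ : J = ⨅ n : ℕ, P ^ n) [J.IsPrime]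
    (hmax : IsMaximalVD (Localization.AtPrime J)
      (IsLocalRing.maximalIdeal (Localization.AtPrime J)))
    (key : ∀ (U : Submodule R (Λ → R)),
      (∀ u ∈ U, ∀ v ∈ U, (∃ c : R, u = c • v) ∨ (∃ c : R, v = c • u)) →
      (∀ s : R, s ∉ J → ∀ u ∈ U, ∃ z ∈ U, u = s • z) →
      ∀ (I : Type u) (w : I → (Λ → R)), (∀ i, w i ∈ U) → ∀ (d : I → R),
      (∀ i k, d i ∣ d k → ∃ z ∈ U, w k - w i = d i • z) →
      ∃ c ∈ U, ∀ i, ∃ z ∈ U, c - w i = d i • z) :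
    IsSeparableMod R (Λ → R) := by
  intro U hpure huniS
  classical
  have huni : ∀ u ∈ U, ∀ v ∈ U, (∃ c : R, u = c • v) ∨ (∃ c : R, v = c • u) := by
    intro u hu v hv
    rcases huniS (Submodule.span R {(⟨u, hu⟩ : U)}) (Submodule.span R {(⟨v, hv⟩ : U)}) with h | h
    · left
      have h1 : (⟨u, hu⟩ : U) ∈ Submodule.span R {(⟨v, hv⟩ : U)} :=
        h (Submodule.mem_span_singleton_self _)
      obtain ⟨c, hc⟩ := Submodule.mem_span_singleton.mp h1
      exact ⟨c, by simpa using congrArg Subtype.val hc.symm⟩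
    · right
      have h1 : (⟨v, hv⟩ : U) ∈ Submodule.span R {(⟨u, hu⟩ : U)} :=
        h (Submodule.mem_span_singleton_self _)
      obtain ⟨c, hc⟩ := Submodule.mem_span_singleton.mp h1
      exact ⟨c, by simpa using congrArg Subtype.val hc.symm⟩
  by_cases hbot : ∀ u ∈ U, u = (0 : Λ → R)
  · have hU : U = ⊥ := by
      rw [eq_bot_iff]; intro u hu; exact (Submodule.mem_bot _).mpr (hbot u hu)
    exact ⟨⊤, hU ▸ isCompl_bot_top⟩
  · push_neg at hbot
    by_cases hcoord : ∃ l : Λ, ∃ u ∈ U, IsUnit (u l)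
    · obtain ⟨l0, u0, hu0U, hu0⟩ := hcoord
      obtain ⟨v, hv⟩ := hu0.exists_left_inv
      set q : (Λ → R) →ₗ[R] R := v • (LinearMap.proj l0) with hqdef
      set p : (Λ → R) →ₗ[R] (Λ → R) := (LinearMap.toSpanSingleton R _ u0).comp q with hpdef
      have hp : ∀ m, p m = (v * m l0) • u0 := fun m => rfl
      apply summand_of_proj p
      · intro m; rw [hp]; exact U.smul_mem _ hu0U
      · intro u hu
        rcases huni u hu u0 hu0U with ⟨c, hc⟩ | ⟨c, hc⟩
        · have h1 : v * (c * u0 l0) = c := by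
            rw [← mul_assoc, mul_comm v c, mul_assoc, hv, mul_one]
          rw [hp, hc, Pi.smul_apply, smul_eq_mul, h1]
        · have hcu : IsUnit c := by
            have h2 : u0 l0 = c * u l0 := by rw [hc]; simp
            exact isUnit_of_mul_isUnit_left (h2 ▸ hu0)
          obtain ⟨cinv, hcinv⟩ := hcu.exists_left_inv
          have hu' : cinv • u0 = u := by rw [hc, smul_smul, hcinv, one_smul]
          rw [hp, ← hu', Pi.smul_apply, smul_eq_mul, ← mul_assoc, mul_comm v cinv,
            mul_assoc, hv, mul_one]
    · push_neg at hcoord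
      have hmemP : ∀ x : R, ¬ IsUnit x → x ∈ P := by
        intro x hx
        rw [IsLocalRing.eq_maximalIdeal hP]
        exact (IsLocalRing.mem_maximalIdeal x).mpr hx
      have hdiv : ∀ s : R, s ∉ J → ∀ u ∈ U, ∃ z ∈ U, u = s • z := by
        by_cases hprin : ∃ t, P = Ideal.span {t}
        · obtain ⟨t, ht⟩ := hprin
          have htU : ∀ u ∈ U, ∃ z ∈ U, u = t • z := by
            intro u hu
            have hcm : ∀ l : Λ, ∃ c : R, u l = t * c := by
              intro l
              have h1 : u l ∈ P := hmemP _ (hcoord l u hu)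
              rw [ht, Ideal.mem_span_singleton] at h1
              obtain ⟨c, hc⟩ := h1
              exact ⟨c, hc⟩
            choose m hm using hcm
            obtain ⟨z, hz, hz2⟩ := hpure t u hu ⟨m, by funext l; simp [hm l]⟩
            exact ⟨z, hz, hz2.symm⟩
          have htUn : ∀ n : ℕ, ∀ u ∈ U, ∃ z ∈ U, u = t ^ n • z := by
            intro n
            induction n with
            | zero => intro u hu; exact ⟨u, hu, by simp⟩
            | succ n ih =>
              intro u hu
              obtain ⟨z, hz, hz2⟩ := htU u hu
              obtain ⟨z', hz', hz2'⟩ := ih z hz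
              refine ⟨z', hz', ?_⟩
              rw [hz2, hz2', smul_smul, ← pow_succ']
          intro s hs u hu
          have hsn : ∃ n : ℕ, s ∉ P ^ n := by
            by_contra h
            push_neg at h
            exact hs (by rw [hJ]; exact (Submodule.mem_iInf _).mpr h)
          obtain ⟨n, hn⟩ := hsn
          have hstn : s ∣ t ^ n := by
            rcases ValuationRing.dvd_total s (t ^ n) with h | h
            · exact h
            · exfalso
              apply hn
              rw [ht, Ideal.span_singleton_pow]
              exact Ideal.mem_span_singleton.mpr h
          obtain ⟨b, hb⟩ := hstn
          obtain ⟨z, hz, hz2⟩ := htUn n u hu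
          exact ⟨b • z, U.smul_mem b hz, by rw [hz2, hb, mul_smul]⟩
        · push_neg at hprin
          have hPP : P ≤ P * P := by
            intro x hx
            have hlt : Ideal.span {x} < P :=
              lt_of_le_of_ne ((Ideal.span_singleton_le_iff_mem _).mpr hx)
                (fun h => hprin x h.symm)
            obtain ⟨b, hbP, hba⟩ := SetLike.exists_of_lt hlt
            have hbx : b ∣ x :=
              (ValuationRing.dvd_total x b).resolve_left
                (fun h => hba (Ideal.mem_span_singleton.mpr h))
            obtain ⟨c, rfl⟩ := hbx
            have hc : c ∈ P := by
              refine hmemP c (fun hcu => hba ?_)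
              obtain ⟨cc, hcc⟩ := hcu.exists_right_inv
              exact Ideal.mem_span_singleton.mpr
                ⟨cc, (by rw [mul_assoc, hcc, mul_one] : b * c * cc = b).symm⟩
            exact Ideal.mul_mem_mul hbP hc
          have hJP : J = P := by
            have hPn : ∀ n : ℕ, P ≤ P ^ n := by
              intro n
              induction n with
              | zero => simpa using le_top
              | succ n ih =>
                calc P ≤ P * P := hPP
                _ ≤ P ^ n * P := Ideal.mul_mono ih le_rfl
                _ = P ^ (n + 1) := (pow_succ P n).symm
            apply le_antisymm
            · rw [hJ]; exact iInf_le_of_le 1 (by simp)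
            · rw [hJ]; exact le_iInf hPn
          intro s hs u hu
          have hsu : IsUnit s := by
            by_contra h
            exact hs (hJP ▸ hmemP s h)
          obtain ⟨v, hv⟩ := hsu.exists_left_inv
          exact ⟨v • u, U.smul_mem v hu, by rw [smul_smul, mul_comm, hv, one_smul]⟩
      -- Zorn's lemma setup: graphs of partial projections onto U
      set G0 : Submodule R ((Λ → R) × (Λ → R)) :=
        Submodule.map (LinearMap.prod LinearMap.id LinearMap.id) U with hG0def
      have hG0mem : ∀ p : (Λ → R) × (Λ → R), p ∈ G0 ↔ p.1 ∈ U ∧ p.2 = p.1 := by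
        intro p
        constructor
        · rintro ⟨u, hu, rfl⟩; exact ⟨hu, rfl⟩
        · rintro ⟨h1, h2⟩
          exact ⟨p.1, h1, by rw [show (LinearMap.prod (LinearMap.id) (LinearMap.id)) p.1
            = (p.1, p.1) from rfl]; exact Prod.ext rfl h2.symm⟩
      set 𝒮 : Set (Submodule R ((Λ → R) × (Λ → R))) :=
        {G | G0 ≤ G ∧ (∀ p ∈ G, p.2 ∈ U) ∧
          (∀ nn yy : (Λ → R), (nn, yy) ∈ G → ∀ s : R,
            (∃ m, nn = s • m) → ∃ z ∈ U, yy = s • z)} with h𝒮def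
      have hG0S : G0 ∈ 𝒮 := by
        refine ⟨le_rfl, ?_, ?_⟩
        · intro p hp
          obtain ⟨h1, h2⟩ := (hG0mem p).mp hp
          rw [h2]; exact h1
        · intro nn yy hmem s hsm
          obtain ⟨h1, h2⟩ := (hG0mem _).mp hmem
          obtain ⟨m, hm⟩ := hsm
          obtain ⟨z, hz, hz2⟩ := hpure s nn h1 ⟨m, hm.symm⟩
          refine ⟨z, hz, ?_⟩
          have h2' : yy = nn := h2
          rw [h2', ← hz2]
      have hchain : ∀ c ⊆ 𝒮, IsChain (· ≤ ·) c → ∀ y ∈ c, ∃ ub ∈ 𝒮, ∀ z ∈ c, z ≤ ub := by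
        intro c hc hch y hy
        haveI : Nonempty c := ⟨⟨y, hy⟩⟩
        have hdir : Directed (· ≤ ·) (fun G : c => (G : Submodule R ((Λ → R) × (Λ → R)))) :=
          directedOn_iff_directed.mp hch.directedOn
        have hmemub : ∀ x, x ∈ (⨆ G : c, (G : Submodule R ((Λ → R) × (Λ → R)))) ↔
            ∃ G : c, x ∈ (G : Submodule R ((Λ → R) × (Λ → R))) := fun x =>
          Submodule.mem_iSup_of_directed _ hdir
        refine ⟨⨆ G : c, (G : Submodule R ((Λ → R) × (Λ → R))), ⟨?_, ?_, ?_⟩,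
          fun z hz => le_iSup (fun G : c => (G : Submodule R ((Λ → R) × (Λ → R)))) ⟨z, hz⟩⟩
        · exact le_trans (hc hy).1 (le_iSup (fun G : c =>
            (G : Submodule R ((Λ → R) × (Λ → R)))) ⟨y, hy⟩)
        · intro p hp
          obtain ⟨G, hpG⟩ := (hmemub p).mp hp
          exact (hc G.2).2.1 p hpG
        · intro nn yy hmem s hsm
          obtain ⟨G, hpG⟩ := (hmemub _).mp hmem
          exact (hc G.2).2.2 nn yy hpG s hsm
      obtain ⟨Gmax, hG0le, hGmax⟩ := zorn_le_nonempty₀ 𝒮 hchain G0 hG0S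
      have hGS := hGmax.1
      by_cases hdom : ∀ x : Λ → R, ∃ y, (x, y) ∈ Gmax
      · choose pf hpf using hdom
        have hfun : ∀ b : Λ → R, ((0 : Λ → R), b) ∈ Gmax → b = 0 := by
          intro b hb
          obtain ⟨z, hz, hz2⟩ := hGS.2.2 0 b hb 0 ⟨0, by simp⟩
          rw [hz2, zero_smul]
        have hadd : ∀ m m', pf (m + m') = pf m + pf m' := by
          intro m m'
          have h1 : ((0 : Λ → R), pf (m + m') - (pf m + pf m')) ∈ Gmax := by
            have h2 := Gmax.sub_mem (hpf (m + m')) (Gmax.add_mem (hpf m) (hpf m'))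
            have h3 : (m + m', pf (m + m')) - ((m, pf m) + (m', pf m')) =
                ((0 : Λ → R), pf (m + m') - (pf m + pf m')) := by
              ext l <;> simp
            rwa [h3] at h2
          exact sub_eq_zero.mp (hfun _ h1)
        have hsmul : ∀ (r : R) m, pf (r • m) = r • pf m := by
          intro r m
          have h1 : ((0 : Λ → R), pf (r • m) - r • pf m) ∈ Gmax := by
            have h2 := Gmax.sub_mem (hpf (r • m)) (Gmax.smul_mem r (hpf m))
            have h3 : (r • m, pf (r • m)) - r • (m, pf m) =
                ((0 : Λ → R), pf (r • m) - r • pf m) := by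
              ext l <;> simp
            rwa [h3] at h2
          exact sub_eq_zero.mp (hfun _ h1)
        apply summand_of_proj
          { toFun := pf
            map_add' := hadd
            map_smul' := hsmul }
        · intro m; exact hGS.2.1 _ (hpf m)
        · intro u hu
          have h2 : ((u, u) : (Λ → R) × (Λ → R)) ∈ Gmax :=
            hG0le ((hG0mem (u, u)).mpr ⟨hu, rfl⟩)
          have h1 : ((0 : Λ → R), pf u - u) ∈ Gmax := by
            have h3 := Gmax.sub_mem (hpf u) h2
            have h4 : (u, pf u) - (u, u) = ((0 : Λ → R), pf u - u) := by
              ext l <;> simp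
            rwa [h4] at h3
          exact sub_eq_zero.mp (hfun _ h1)
      · push_neg at hdom
        obtain ⟨x, hx⟩ := hdom
        exfalso
        set Ix : Type u := {qq : (R × R) × ((Λ → R) × (Λ → R)) //
          qq.2 ∈ Gmax ∧ qq.1.1 ≠ 0 ∧ qq.1.1 ∣ qq.1.2 ∧
          ∃ m, qq.1.1 • x + qq.2.1 = qq.1.2 • m} with hIxdef
        have hdd : ∀ qq : Ix, ∃ e : R, qq.1.1.2 = qq.1.1.1 * e := fun qq => qq.2.2.2.1
        choose dfn hdfn using hdd
        have hwex : ∀ qq : Ix, ∃ z ∈ U, qq.1.2.2 = qq.1.1.1 • z := by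
          rintro ⟨⟨⟨r, s⟩, ⟨n, y⟩⟩, hG, hr, hdvd, ⟨m, hm⟩⟩
          obtain ⟨e, he⟩ := hdvd
          refine hGS.2.2 n y hG r ⟨e • m - x, ?_⟩
          rw [smul_sub, smul_smul, ← he, ← hm, add_sub_cancel_left]
        choose wfn hwU hwspec using hwex
        have hcohIx : ∀ qq kk : Ix, dfn qq ∣ dfn kk →
            ∃ z ∈ U, (-(wfn kk)) - (-(wfn qq)) = dfn qq • z := by
          intro qq kk hqk
          obtain ⟨e, he⟩ := hqk
          obtain ⟨m1, hm1⟩ := qq.2.2.2.2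
          obtain ⟨m2, hm2⟩ := kk.2.2.2.2
          have hr1 : qq.1.1.1 ≠ 0 := qq.2.2.1
          have hr2 : kk.1.1.1 ≠ 0 := kk.2.2.1
          have hX : (kk.1.1.1 • qq.1.2.1 - qq.1.1.1 • kk.1.2.1,
              kk.1.1.1 • qq.1.2.2 - qq.1.1.1 • kk.1.2.2) ∈ Gmax := by
            have h5 := Gmax.sub_mem (Gmax.smul_mem kk.1.1.1 qq.2.1)
              (Gmax.smul_mem qq.1.1.1 kk.2.1)
            have h6 : kk.1.1.1 • qq.1.2 - qq.1.1.1 • kk.1.2 =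
                (kk.1.1.1 • qq.1.2.1 - qq.1.1.1 • kk.1.2.1,
                 kk.1.1.1 • qq.1.2.2 - qq.1.1.1 • kk.1.2.2) := rfl
            rwa [h6] at h5
          have hn1 : qq.1.2.1 = qq.1.1.2 • m1 - qq.1.1.1 • x := by
            rw [← hm1]; abel
          have hn2 : kk.1.2.1 = kk.1.1.2 • m2 - kk.1.1.1 • x := by
            rw [← hm2]; abel
          have heq : kk.1.1.1 • qq.1.2.1 - qq.1.1.1 • kk.1.2.1 =
              (qq.1.1.1 * (kk.1.1.1 * dfn qq)) • (m1 - e • m2) := by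
            rw [hn1, hn2, hdfn qq, hdfn kk, he]
            rw [smul_sub, smul_sub, smul_sub, smul_smul, smul_smul, smul_smul, smul_smul,
              smul_smul]
            ring_nf
          obtain ⟨z, hz, hz2⟩ := hGS.2.2 _ _ hX (qq.1.1.1 * (kk.1.1.1 * dfn qq))
            ⟨m1 - e • m2, heq⟩
          refine ⟨z, hz, ?_⟩
          apply smul_cancel (mul_ne_zero hr1 hr2)
          have hy1 : qq.1.2.2 = qq.1.1.1 • wfn qq := hwspec qq
          have hy2 : kk.1.2.2 = kk.1.1.1 • wfn kk := hwspec kk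
          rw [hy1, hy2] at hz2
          have hz2' : (qq.1.1.1 * kk.1.1.1) • (wfn qq - wfn kk) =
              (qq.1.1.1 * kk.1.1.1) • (dfn qq • z) := by
            rw [smul_sub]
            calc (qq.1.1.1 * kk.1.1.1) • wfn qq - (qq.1.1.1 * kk.1.1.1) • wfn kk
                = kk.1.1.1 • qq.1.1.1 • wfn qq - qq.1.1.1 • kk.1.1.1 • wfn kk := by
                  rw [smul_smul, smul_smul, mul_comm kk.1.1.1 qq.1.1.1]
              _ = (qq.1.1.1 * (kk.1.1.1 * dfn qq)) • z := hz2
              _ = (qq.1.1.1 * kk.1.1.1) • (dfn qq • z) := by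
                  rw [smul_smul, mul_assoc]
          have h7 := smul_cancel (mul_ne_zero hr1 hr2) hz2'
          rw [neg_sub_neg, h7]
        obtain ⟨cstar, hcstarU, hcstar⟩ := key U huni hdiv Ix
          (fun qq => -(wfn qq)) (fun qq => U.neg_mem (hwU qq)) dfn hcohIx
        have hdecomp : ∀ p ∈ Gmax ⊔ Submodule.span R {((x, cstar) : (Λ → R) × (Λ → R))},
            ∃ g ∈ Gmax, ∃ r : R, p = g + r • ((x, cstar)) := by
          intro p hp
          rw [Submodule.mem_sup] at hp
          obtain ⟨g, hg, t, ht, rfl⟩ := hp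
          rw [Submodule.mem_span_singleton] at ht
          obtain ⟨r, rfl⟩ := ht
          exact ⟨g, hg, r, rfl⟩
        have hG'S : Gmax ⊔ Submodule.span R {((x, cstar) : (Λ → R) × (Λ → R))} ∈ 𝒮 := by
          refine ⟨le_trans hG0le le_sup_left, ?_, ?_⟩
          · intro p hp
            obtain ⟨g, hg, r, rfl⟩ := hdecomp p hp
            exact U.add_mem (hGS.2.1 g hg) (U.smul_mem r hcstarU)
          · intro nn yy hmem s hsm
            obtain ⟨g, hg, r, hgr⟩ := hdecomp (nn, yy) hmem
            have hnn : nn = g.1 + r • x := congrArg Prod.fst hgr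
            have hyy : yy = g.2 + r • cstar := congrArg Prod.snd hgr
            obtain ⟨m, hm⟩ := hsm
            rcases ValuationRing.dvd_total s r with ⟨e, he⟩ | hrs
            · have hg1 : g.1 = s • (m - e • x) := by
                rw [smul_sub, smul_smul, ← he, ← hm, hnn]
                abel
              obtain ⟨z, hz, hz2⟩ := hGS.2.2 g.1 g.2 hg s ⟨m - e • x, hg1⟩
              refine ⟨z + e • cstar, U.add_mem hz (U.smul_mem e hcstarU), ?_⟩
              rw [hyy, hz2, he, mul_smul, ← smul_add]
            · by_cases hr0 : r = 0
              · have hs0 : s = 0 := zero_dvd_iff.mp (hr0 ▸ hrs)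
                have hnn0 : nn = 0 := by rw [hm, hs0, zero_smul]
                have hg10 : g.1 = (0 : R) • (0 : Λ → R) := by
                  rw [zero_smul]
                  have h8 := hnn0
                  rw [hnn, hr0, zero_smul, add_zero] at h8
                  exact h8
                obtain ⟨z, hz, hz2⟩ := hGS.2.2 g.1 g.2 hg 0 ⟨0, hg10⟩
                refine ⟨z, hz, ?_⟩
                rw [hyy, hr0, zero_smul, add_zero, hz2, hs0]
              · have hmq : ∃ m', r • x + g.1 = s • m' :=
                  ⟨m, by rw [← hm, hnn]; abel⟩
                obtain ⟨z, hz, hz2⟩ := hcstar ⟨((r, s), g), hg, hr0, hrs, hmq⟩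
                rw [sub_neg_eq_add] at hz2
                refine ⟨z, hz, ?_⟩
                have hy2 : g.2 = r • wfn ⟨((r, s), g), hg, hr0, hrs, hmq⟩ :=
                  hwspec ⟨((r, s), g), hg, hr0, hrs, hmq⟩
                have hds : s = r * dfn ⟨((r, s), g), hg, hr0, hrs, hmq⟩ :=
                  hdfn ⟨((r, s), g), hg, hr0, hrs, hmq⟩
                calc yy = r • wfn ⟨((r, s), g), hg, hr0, hrs, hmq⟩ + r • cstar := by
                      rw [hyy, hy2]
                  _ = r • (cstar + wfn ⟨((r, s), g), hg, hr0, hrs, hmq⟩) := by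
                      rw [smul_add]; abel
                  _ = r • (dfn ⟨((r, s), g), hg, hr0, hrs, hmq⟩ • z) := by rw [hz2]
                  _ = (r * dfn ⟨((r, s), g), hg, hr0, hrs, hmq⟩) • z := by rw [smul_smul]
                  _ = s • z := by rw [← hds]
        have hle' : Gmax ⊔ Submodule.span R {((x, cstar) : (Λ → R) × (Λ → R))} ≤ Gmax :=
          hGmax.2 hG'S le_sup_left
        exact hx cstar (hle' ((le_sup_right :
            Submodule.span R {((x, cstar) : (Λ → R) × (Λ → R))} ≤ _)
          (Submodule.mem_span_singleton_self _)))

end Stmt3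

/-- if `J = ⋂ₙ Pⁿ` and `R_J` is a maximal valuation domain, then `R^Λ` is
separable for every index set `Λ`. -/
theorem stmt_3 {R : Type u} [CommRing R] [IsDomain R] [ValuationRing R]
    (P : Ideal R) (hP : P.IsMaximal) (J : Ideal R) (hJ : J = ⨅ n : ℕ, P ^ n) [J.IsPrime]
    (hmax : IsMaximalVD (Localization.AtPrime J)
      (IsLocalRing.maximalIdeal (Localization.AtPrime J))) :
    ∀ Λ : Type u, IsSeparableMod R (Λ → R) := by
  intro Λ
  exact Stmt3.main P hP J hJ hmax
    (fun U h1 h2 I w hw d hc => Stmt3.key J hmax U h1 h2 I w hw d hc)
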